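/- Let f : B → M be a smooth map between compact oriented n-manifolds (B possibly with corners, with the regular value p in the image of the interior only), and let p ∈ M be a regular value of f not in the image of ∂B. Then f^{-1}(p) is finite, and for any n-form ω on M with ∫_M ω = 1 and support contained in a sufficiently small neighborhood of p, the integral ∫_B f*ω equals the sum over x ∈ f^{-1}(p) of sgn(df_x), where sgn(df_x) = ±1 according to whether df_x preserves or reverses orientation. -/

import Mathlib

open MeasureTheory Set

noncomputable section

private lemma real_sign_eq_of_mul_pos {a b : ℝ} (h : 0 < a * b) :
    Real.sign a = Real.sign b := by
  rcases lt_trichotomy a 0 with ha | ha | ha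
  · have hb : b < 0 := by nlinarith
    rw [Real.sign_of_neg ha, Real.sign_of_neg hb]
  · simp [ha] at h
  · have hb : 0 < b := by nlinarith
    rw [Real.sign_of_pos ha, Real.sign_of_pos hb]

private lemma real_sign_mul_abs (a : ℝ) : Real.sign a * |a| = a := by
  rcases lt_trichotomy a 0 with ha | ha | ha
  · rw [Real.sign_of_neg ha, abs_of_neg ha]; ring
  · simp [ha]
  · rw [Real.sign_of_pos ha, abs_of_pos ha]; ring

/-- local degree counting formula: let B be a compact oriented n-manifold
(possibly with corners), presented in an oriented chart as a compact subset of ℝⁿ, let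
f : B → M be smooth (M an oriented n-manifold, presented in an oriented chart around the
point p), and let p be a regular value of f not in the image of the boundary ∂B (here the
frontier of B).  Then f⁻¹(p) is finite, and for every n-form ω on M — written as a
density `ω : ℝⁿ → ℝ` against the chart volume, so that its pullback f*ω has density
x ↦ ω(f x)·det(df_x) — with total integral 1 and support in a sufficiently small
neighborhood of p, the integral ∫_B f*ω equals Σ_{x ∈ f⁻¹(p)} sgn(det df_x). -/
theorem local_degree_counting {n : ℕ}
    (B U : Set (EuclideanSpace ℝ (Fin n)))
    (hBcompact : IsCompact B) (hBmeas : MeasurableSet B)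
    (hUopen : IsOpen U) (hBU : B ⊆ U)
    (f : EuclideanSpace ℝ (Fin n) → EuclideanSpace ℝ (Fin n))
    (hf : ContDiffOn ℝ 1 f U)
    (p : EuclideanSpace ℝ (Fin n))
    -- p is a regular value of f:
    (hreg : ∀ x ∈ B, f x = p → (fderiv ℝ f x).det ≠ 0)
    -- p is not in the image of the boundary of B:
    (hbd : p ∉ f '' (frontier B)) :
    {x | x ∈ B ∧ f x = p}.Finite ∧
    ∃ ε > 0, ∀ ω : EuclideanSpace ℝ (Fin n) → ℝ, Continuous ω →
      Function.support ω ⊆ Metric.ball p ε → (∫ y, ω y = 1) →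
      ∫ x in B, ω (f x) * (fderiv ℝ f x).det
        = ∑ᶠ x ∈ {x | x ∈ B ∧ f x = p}, Real.sign ((fderiv ℝ f x).det) := by
  classical
  set S := {x : (EuclideanSpace ℝ (Fin n)) | x ∈ B ∧ f x = p} with hSdef
  have hBclosed : IsClosed B := hBcompact.isClosed
  have hfc : ContinuousOn f U := hf.continuousOn
  have hdiff : ∀ x ∈ U, DifferentiableAt ℝ f x := fun x hx =>
    (hf.contDiffAt (hUopen.mem_nhds hx)).differentiableAt one_ne_zero
  have hfd_cont : ContinuousOn (fderiv ℝ f) U :=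
    hf.continuousOn_fderiv_of_isOpen hUopen le_rfl
  -- the key local construction around each preimage point
  have key : ∀ x : (EuclideanSpace ℝ (Fin n)), ∃ V : Set (EuclideanSpace ℝ (Fin n)), x ∈ S →
      (IsOpen V ∧ x ∈ V ∧ V ⊆ interior B ∧ V ⊆ U ∧ Set.InjOn f V ∧
      (∀ W ⊆ V, IsOpen W → IsOpen (f '' W)) ∧
      (∀ y ∈ V, Real.sign ((fderiv ℝ f y).det) = Real.sign ((fderiv ℝ f x).det))) := by
    intro x
    by_cases hxS : x ∈ S
    swap
    · exact ⟨∅, fun h => absurd h hxS⟩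
    obtain ⟨hxB, hxp⟩ := hxS
    have hxU : x ∈ U := hBU hxB
    have hdet : (fderiv ℝ f x).det ≠ 0 := hreg x hxB hxp
    have hxint : x ∈ interior B := by
      by_contra h
      refine hbd ⟨x, ?_, hxp⟩
      rw [hBclosed.frontier_eq]
      exact ⟨hxB, h⟩
    set e := (fderiv ℝ f x).toContinuousLinearEquivOfDetNeZero hdet with he
    have hstrict : HasStrictFDerivAt f (e : (EuclideanSpace ℝ (Fin n)) →L[ℝ] (EuclideanSpace ℝ (Fin n))) x := by
      rw [he, ContinuousLinearMap.coe_toContinuousLinearEquivOfDetNeZero]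
      exact (hf.contDiffAt (hUopen.mem_nhds hxU)).hasStrictFDerivAt one_ne_zero
    set Φ := hstrict.toOpenPartialHomeomorph f with hΦ
    have hxsrc : x ∈ Φ.source := hstrict.mem_toOpenPartialHomeomorph_source
    have hcoe : (Φ : (EuclideanSpace ℝ (Fin n)) → (EuclideanSpace ℝ (Fin n))) = f := hstrict.toOpenPartialHomeomorph_coe
    -- the set where the determinant has the same sign as at x
    set D := U ∩ (fun y => (fderiv ℝ f y).det * (fderiv ℝ f x).det) ⁻¹' Set.Ioi 0 with hD
    have hDopen : IsOpen D :=
      ((ContinuousLinearMap.continuous_det.comp_continuousOn hfd_cont).mul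
        continuousOn_const).isOpen_inter_preimage hUopen isOpen_Ioi
    have hxD : x ∈ D := ⟨hxU, by simpa using mul_self_pos.2 hdet⟩
    refine ⟨Φ.source ∩ (interior B ∩ D), fun _ => ?_⟩
    refine ⟨Φ.open_source.inter (isOpen_interior.inter hDopen),
      ⟨hxsrc, hxint, hxD⟩,
      fun y hy => hy.2.1,
      fun y hy => hy.2.2.1,
      ?_, ?_, ?_⟩
    · have := Φ.injOn
      rw [hcoe] at this
      exact this.mono inter_subset_left
    · intro W hW hWopen
      rw [← hcoe]
      exact Φ.isOpen_image_of_subset_source hWopen (hW.trans inter_subset_left)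
    · intro y hy
      exact real_sign_eq_of_mul_pos hy.2.2.2
  choose V hV using key
  -- finiteness of S
  have hSsubB : S ⊆ B := fun x hx => hx.1
  have hSclosed : IsClosed S := by
    have hOopen : IsOpen (U ∩ f ⁻¹' {y : (EuclideanSpace ℝ (Fin n)) | y ≠ p}) :=
      hfc.isOpen_inter_preimage hUopen isOpen_ne
    have : S = B \ (U ∩ f ⁻¹' {y : (EuclideanSpace ℝ (Fin n)) | y ≠ p}) := by
      ext y
      simp only [hSdef, Set.mem_setOf_eq, Set.mem_diff, Set.mem_inter_iff, Set.mem_preimage,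
        not_and, not_not]
      constructor
      · rintro ⟨hyB, hyp⟩
        exact ⟨hyB, fun _ => by simpa using hyp⟩
      · rintro ⟨hyB, h⟩
        exact ⟨hyB, by simpa using h (hBU hyB)⟩
    rw [this]
    exact hBclosed.sdiff hOopen
  have hScompact : IsCompact S := hBcompact.of_isClosed_subset hSclosed hSsubB
  have hSfin : S.Finite := by
    refine hScompact.finite ?_
    rw [isDiscrete_iff_nhdsNE]
    intro x hxS
    rw [Filter.inf_principal_eq_bot]
    obtain ⟨hVopen, hxV, _, _, hVinj, _, _⟩ := hV x hxS
    refine mem_nhdsWithin.2 ⟨V x, hVopen, hxV, ?_⟩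
    rintro y ⟨hyV, hyne⟩ hyS
    refine hyne ?_
    have : f y = f x := by rw [hyS.2, hxS.2]
    exact hVinj hyV hxV this
  refine ⟨hSfin, ?_⟩
  -- separation radii
  have hrad : ∀ x : (EuclideanSpace ℝ (Fin n)), ∃ r : ℝ, 0 < r ∧ ∀ y ∈ S, y ≠ x → 2 * r ≤ dist x y := by
    intro x
    by_cases h : (S \ {x}).Nonempty
    · obtain ⟨y₀, hy₀, hmin⟩ :=
        Set.exists_min_image (S \ {x}) (dist x) hSfin.diff h
      refine ⟨dist x y₀ / 2, ?_, ?_⟩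
      · have hne : x ≠ y₀ := fun hh => hy₀.2 (by simp [← hh])
        exact half_pos (dist_pos.2 hne)
      · intro y hy hyne
        have := hmin y ⟨hy, hyne⟩
        linarith
    · refine ⟨1, one_pos, fun y hy hyne => absurd ⟨hy, hyne⟩ (fun hh => h ⟨y, hh⟩)⟩
  choose r hrpos hrsep using hrad
  -- shrunken neighborhoods
  set V' : (EuclideanSpace ℝ (Fin n)) → Set (EuclideanSpace ℝ (Fin n)) := fun x => V x ∩ Metric.ball x (r x) with hV'def
  have hV'open : ∀ x ∈ S, IsOpen (V' x) := fun x hx =>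
    ((hV x hx).1).inter Metric.isOpen_ball
  have hV'mem : ∀ x ∈ S, x ∈ V' x := fun x hx =>
    ⟨(hV x hx).2.1, Metric.mem_ball_self (hrpos x)⟩
  have hV'B : ∀ x ∈ S, V' x ⊆ B := fun x hx =>
    (inter_subset_left.trans (hV x hx).2.2.1).trans interior_subset
  have hV'U : ∀ x ∈ S, V' x ⊆ U := fun x hx =>
    inter_subset_left.trans (hV x hx).2.2.2.1
  have hV'disj : ∀ x ∈ S, ∀ y ∈ S, x ≠ y → Disjoint (V' x) (V' y) := by
    intro x hx y hy hxy
    rw [Set.disjoint_left]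
    rintro z ⟨_, hzx⟩ ⟨_, hzy⟩
    have h1 : 2 * r x ≤ dist x y := hrsep x y hy (Ne.symm hxy)
    have h2 : 2 * r y ≤ dist y x := hrsep y x hx hxy
    have h3 : dist x y ≤ dist x z + dist z y := dist_triangle x z y
    rw [Metric.mem_ball] at hzx hzy
    rw [dist_comm y x] at h2
    have h4 : dist x z < r x := by rwa [dist_comm]
    have h5 : dist z y < r y := hzy
    linarith
  -- the compact set away from the preimages
  set K := B \ ⋃ x ∈ S, V' x with hK
  have hKcomp : IsCompact K :=
    hBcompact.diff (isOpen_biUnion fun x hx => hV'open x hx)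
  have hKU : K ⊆ U := (diff_subset.trans hBU)
  have hfK : IsCompact (f '' K) := hKcomp.image_of_continuousOn (hfc.mono hKU)
  have hpK : p ∉ f '' K := by
    rintro ⟨y, hyK, hyp⟩
    have hyS : y ∈ S := ⟨hyK.1, hyp⟩
    exact hyK.2 (Set.mem_biUnion hyS (hV'mem y hyS))
  -- choose ε
  set W₀ := (⋂ x ∈ S, f '' V' x) ∩ (f '' K)ᶜ with hW₀
  have hW₀open : IsOpen W₀ := by
    refine IsOpen.inter ?_ hfK.isClosed.isOpen_compl
    refine hSfin.isOpen_biInter fun x hx => ?_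
    exact (hV x hx).2.2.2.2.2.1 (V' x) inter_subset_left (hV'open x hx)
  have hpW₀ : p ∈ W₀ := by
    refine ⟨Set.mem_biInter fun x hx => ⟨x, hV'mem x hx, hx.2⟩, hpK⟩
  obtain ⟨ε, hεpos, hεball⟩ := Metric.isOpen_iff.1 hW₀open p hpW₀
  refine ⟨ε, hεpos, ?_⟩
  intro ω hω hsupp hωint
  set g : (EuclideanSpace ℝ (Fin n)) → ℝ := fun y => ω (f y) * (fderiv ℝ f y).det with hg
  have hgcontU : ContinuousOn g U :=
    (hω.comp_continuousOn hfc).mul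
      (ContinuousLinearMap.continuous_det.comp_continuousOn hfd_cont)
  have hgint : IntegrableOn g B := (hgcontU.mono hBU).integrableOn_compact hBcompact
  set t := hSfin.toFinset with ht
  have htS : ∀ x, x ∈ t ↔ x ∈ S := fun x => hSfin.mem_toFinset
  have hUT : (⋃ x ∈ t, V' x) = ⋃ x ∈ S, V' x := by
    ext y
    simp only [Set.mem_iUnion, exists_prop]
    exact exists_congr fun x => and_congr_left' (htS x)
  have hUsub : (⋃ x ∈ t, V' x) ⊆ B := by
    rw [hUT]
    exact Set.iUnion₂_subset fun x hx => hV'B x hx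
  have hUmeas : MeasurableSet (⋃ x ∈ t, V' x) :=
    (isOpen_biUnion fun x hx => hV'open x ((htS x).1 hx)).measurableSet
  -- step 1: restrict the integral to the union of the V' x
  have step1 : ∫ x in B, g x = ∫ x in ⋃ x ∈ t, V' x, g x := by
    have hsplit := integral_inter_add_diff (μ := volume) (s := B)
      (t := ⋃ x ∈ t, V' x) (f := g) hUmeas hgint
    rw [Set.inter_eq_self_of_subset_right hUsub] at hsplit
    have hzero : ∫ x in B \ ⋃ x ∈ t, V' x, g x = 0 := by
      refine setIntegral_eq_zero_of_forall_eq_zero fun y hy => ?_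
      have hyK : y ∈ K := by rw [hK, ← hUT]; exact hy
      have : f y ∉ Metric.ball p ε := by
        intro hball
        exact (hεball hball).2 ⟨y, hyK, rfl⟩
      have hω0 : ω (f y) = 0 := by
        by_contra hne
        exact this (hsupp hne)
      simp [hg, hω0]
    rw [← hsplit, hzero, add_zero]
  -- step 2: split the integral over the disjoint union
  have step2 : ∫ x in ⋃ x ∈ t, V' x, g x = ∑ x ∈ t, ∫ y in V' x, g y := by
    refine integral_biUnion_finset t
      (fun x hx => (hV'open x ((htS x).1 hx)).measurableSet) ?_ ?_
    · intro x hx y hy hxy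
      exact hV'disj x ((htS x).1 hx) y ((htS y).1 hy) hxy
    · intro x hx
      exact hgint.mono_set (hV'B x ((htS x).1 hx))
  -- step 3: compute each local integral
  have step3 : ∀ x ∈ t, ∫ y in V' x, g y = Real.sign ((fderiv ℝ f x).det) := by
    intro x hxt
    have hxS : x ∈ S := (htS x).1 hxt
    obtain ⟨hVopen, hxV, hVB, hVU, hVinj, hVimg, hVsign⟩ := hV x hxS
    have hV'meas : MeasurableSet (V' x) := (hV'open x hxS).measurableSet
    have hder : ∀ y ∈ V' x, HasFDerivWithinAt f (fderiv ℝ f y) (V' x) y := fun y hy =>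
      (hdiff y (hV'U x hxS hy)).hasFDerivAt.hasFDerivWithinAt
    have hinj : Set.InjOn f (V' x) := hVinj.mono inter_subset_left
    have hCOV := integral_image_eq_integral_abs_det_fderiv_smul volume hV'meas hder hinj ω
    have himg : ∫ y in f '' V' x, ω y = 1 := by
      rw [setIntegral_eq_integral_of_forall_compl_eq_zero, hωint]
      intro y hy
      by_contra hne
      have : y ∈ Metric.ball p ε := hsupp hne
      have : y ∈ W₀ := hεball this
      exact hy (Set.biInter_subset_of_mem hxS this.1)
    have hcong : ∀ y ∈ V' x, g y =
        Real.sign ((fderiv ℝ f x).det) * (|(fderiv ℝ f y).det| • ω (f y)) := by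
      intro y hy
      have hs : Real.sign ((fderiv ℝ f y).det) = Real.sign ((fderiv ℝ f x).det) :=
        hVsign y (inter_subset_left hy)
      rw [hg]
      simp only [smul_eq_mul]
      calc ω (f y) * (fderiv ℝ f y).det
          = ω (f y) * (Real.sign ((fderiv ℝ f y).det) * |(fderiv ℝ f y).det|) := by
            rw [real_sign_mul_abs]
        _ = Real.sign ((fderiv ℝ f x).det) * (|(fderiv ℝ f y).det| * ω (f y)) := by
            rw [hs]; ring
    calc ∫ y in V' x, g y
        = ∫ y in V' x, Real.sign ((fderiv ℝ f x).det) * (|(fderiv ℝ f y).det| • ω (f y)) :=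
          setIntegral_congr_fun hV'meas hcong
      _ = Real.sign ((fderiv ℝ f x).det) * ∫ y in V' x, |(fderiv ℝ f y).det| • ω (f y) :=
          integral_const_mul _ _
      _ = Real.sign ((fderiv ℝ f x).det) * ∫ y in f '' V' x, ω y := by rw [hCOV]
      _ = Real.sign ((fderiv ℝ f x).det) := by rw [himg, mul_one]
  -- conclude
  rw [step1, step2, Finset.sum_congr rfl step3]
  rw [← hSfin.coe_toFinset, finsum_mem_coe_finset]
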